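/- Let E be a real normed vector space, u : ℝ → (E →L[ℝ] ℝ), s : ℝ → ℝ, w ∈ (E →L[ℝ] ℝ), φ∞ ≠ 0, let g : ℝ → (E →L[ℝ] E →L[ℝ] ℝ) with limit g∞ along atBot, and let B : ℝ → ((E →L[ℝ] ℝ) →L[ℝ] (E →L[ℝ] ℝ) →L[ℝ] ℝ) with limit B∞ along atBot. Assume Filter.Tendsto (fun ω => Real.sqrt |ω| • u ω) atBot (𝓝 w), Filter.Tendsto s atBot (𝓝 φ∞), Filter.Tendsto g atBot (𝓝 g∞), and Filter.Tendsto B atBot (𝓝 B∞). Then for all vectors X, Y ∈ E, Filter.Tendsto (fun ω => (ω / (s ω)^2) * (u ω X * u ω Y - (1/2) * g ω X Y * B ω (u ω) (u ω))) atBot (𝓝 (-(1/φ∞^2) * (w X * w Y - (1/2) * g∞ X Y * B∞ w w))); i.e. for ω → -∞ the limit of A_{ab} acquires the factor sign(ω) = -1. -/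

import Mathlib

open Filter Topology Real

set_option maxHeartbeats 1000000 in
/-- For `ω → -∞` the limit of the anomalous term
`A_{ab} = (ω/φ²)(∇ₐφ∇_bφ - ½ g_{ab} ∇_cφ∇ᶜφ)` acquires the factor `sign(ω) = -1`:
when `√|ω| • ∇ₐφ → ∇ₐΦ` and `φ(ω) → φ∞ ≠ 0`, evaluated on any pair of vectors `X, Y`
it tends to `-(1/φ∞²)(∇ₐΦ∇_bΦ - ½ g^{(∞)}_{ab} ∇_cΦ∇ᶜΦ)(X,Y)`. -/
theorem anomalous_term_limit_atBot
    {E : Type*} [NormedAddCommGroup E] [NormedSpace ℝ E]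
    (u : ℝ → (E →L[ℝ] ℝ)) (s : ℝ → ℝ) (w : E →L[ℝ] ℝ) (φinf : ℝ) (hφinf : φinf ≠ 0)
    (g : ℝ → (E →L[ℝ] E →L[ℝ] ℝ)) (ginf : E →L[ℝ] E →L[ℝ] ℝ)
    (B : ℝ → ((E →L[ℝ] ℝ) →L[ℝ] (E →L[ℝ] ℝ) →L[ℝ] ℝ))
    (Binf : (E →L[ℝ] ℝ) →L[ℝ] (E →L[ℝ] ℝ) →L[ℝ] ℝ)
    (hu : Filter.Tendsto (fun ω => Real.sqrt |ω| • u ω) Filter.atBot (𝓝 w))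
    (hs : Filter.Tendsto s Filter.atBot (𝓝 φinf))
    (hg : Filter.Tendsto g Filter.atBot (𝓝 ginf))
    (hB : Filter.Tendsto B Filter.atBot
      (@nhds _ (@ContinuousLinearMap.topologicalSpace ℝ ℝ _ _ (RingHom.id ℝ) (E →L[ℝ] ℝ)
        ((E →L[ℝ] ℝ) →L[ℝ] ℝ) _ _ _ _ _ _ _) Binf)) :
    ∀ X Y : E,
      Filter.Tendsto
        (fun ω => (ω / (s ω) ^ 2) *
          (u ω X * u ω Y - (1/2) * g ω X Y * B ω (u ω) (u ω)))
        Filter.atBot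
        (𝓝 (-(1 / φinf ^ 2) * (w X * w Y - (1/2) * ginf X Y * Binf w w))) := by
  intro X Y
  set v : ℝ → (E →L[ℝ] ℝ) := fun ω => Real.sqrt |ω| • u ω with hv
  -- limits of components
  have hvX : Tendsto (fun ω => v ω X) atBot (𝓝 (w X)) :=
    ((ContinuousLinearMap.apply ℝ ℝ X).continuous.tendsto w).comp hu
  have hvY : Tendsto (fun ω => v ω Y) atBot (𝓝 (w Y)) :=
    ((ContinuousLinearMap.apply ℝ ℝ Y).continuous.tendsto w).comp hu
  have hgXY : Tendsto (fun ω => g ω X Y) atBot (𝓝 (ginf X Y)) := by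
    have h1 : Tendsto (fun ω => g ω X) atBot (𝓝 (ginf X)) :=
      ((ContinuousLinearMap.apply ℝ (E →L[ℝ] ℝ) X).continuous.tendsto ginf).comp hg
    exact ((ContinuousLinearMap.apply ℝ ℝ Y).continuous.tendsto (ginf X)).comp h1
  have hBv : Tendsto (fun ω => B ω (v ω)) atBot (𝓝 (Binf w)) := by
    have := (isBoundedBilinearMap_apply
        (𝕜 := ℝ) (E := E →L[ℝ] ℝ) (F := (E →L[ℝ] ℝ) →L[ℝ] ℝ)).continuous.tendsto (Binf, w)
    letI instB : TopologicalSpace ((E →L[ℝ] ℝ) →L[ℝ] (E →L[ℝ] ℝ) →L[ℝ] ℝ) :=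
      @ContinuousLinearMap.topologicalSpace ℝ ℝ _ _ (RingHom.id ℝ) (E →L[ℝ] ℝ)
        ((E →L[ℝ] ℝ) →L[ℝ] ℝ) _ _ _ _ _ _ _
    exact this.comp (hB.prodMk_nhds hu)
  have hBvv : Tendsto (fun ω => B ω (v ω) (v ω)) atBot (𝓝 (Binf w w)) := by
    have := (isBoundedBilinearMap_apply
        (𝕜 := ℝ) (E := E →L[ℝ] ℝ) (F := ℝ)).continuous.tendsto (Binf w, w)
    exact this.comp (hBv.prodMk_nhds hu)
  have hc : Tendsto (fun ω => -(1 / (s ω) ^ 2)) atBot (𝓝 (-(1 / φinf ^ 2))) := by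
    have : Tendsto (fun ω => (s ω) ^ 2) atBot (𝓝 (φinf ^ 2)) := hs.pow 2
    exact ((tendsto_const_nhds.div this (pow_ne_zero 2 hφinf))).neg
  have hmain : Tendsto
      (fun ω => (-(1 / (s ω) ^ 2)) *
        (v ω X * v ω Y - (1/2) * g ω X Y * B ω (v ω) (v ω)))
      atBot (𝓝 (-(1 / φinf ^ 2) * (w X * w Y - (1/2) * ginf X Y * Binf w w))) :=
    hc.mul ((hvX.mul hvY).sub ((tendsto_const_nhds.mul hgXY).mul hBvv))
  refine hmain.congr' ?_
  filter_upwards [eventually_le_atBot (0 : ℝ)] with ω hω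
  obtain ⟨a, ha, rfl⟩ : ∃ a, 0 ≤ a ∧ ω = -a := ⟨-ω, by linarith, by ring⟩
  have habs : |(-a)| = a := by rw [abs_neg, abs_of_nonneg ha]
  have hsq : Real.sqrt |(-a)| * Real.sqrt |(-a)| = a := by
    rw [habs]; exact Real.mul_self_sqrt ha
  have hvXe : v (-a) X = Real.sqrt |(-a)| * u (-a) X := rfl
  have hvYe : v (-a) Y = Real.sqrt |(-a)| * u (-a) Y := rfl
  have hBe : B (-a) (v (-a)) (v (-a)) = a * B (-a) (u (-a)) (u (-a)) := by
    simp only [hv, map_smul, ContinuousLinearMap.smul_apply, smul_eq_mul]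
    rw [← mul_assoc, hsq]
  have hxy : Real.sqrt |(-a)| * u (-a) X * (Real.sqrt |(-a)| * u (-a) Y)
      = a * (u (-a) X * u (-a) Y) := by rw [mul_mul_mul_comm, hsq]
  rw [hvXe, hvYe, hBe, hxy]
  ring
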